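/- If ã: {0,…,d−1}^n → ℂ is supported on at most two points 𝐱 ≠ 𝐲, and its inverse discrete Fourier transform a_𝐢 = d^{−n/2}(α e^{−2πi𝐢·𝐱/d} + β e^{−2πi𝐢·𝐲/d}) (with α, β ≠ 0) vanishes at 𝐢 = (1,…,1) and at every permutation of (2,1,…,1), then 𝐱 = 𝐲, a contradiction. Hence no such doubly-supported ã exists with these vanishing constraints. -/

import Mathlib

open scoped BigOperators

/-- If `a_𝐢 = d^{−n/2}(α e^{−2πi𝐢·𝐱/d} + β e^{−2πi𝐢·𝐲/d})`
(the inverse Fourier transform of a function supported on the two points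
`𝐱 ≠ 𝐲`, with `α, β ≠ 0`) vanishes at `𝐢 = (1,…,1)` and at every permutation
of `(2,1,…,1)`, we reach a contradiction (since the constraints force
`𝐱 = 𝐲`). -/
theorem stmt_14 (d n : ℕ) (hd : 3 ≤ d) (hn : 1 ≤ n)
    (x y : Fin n → Fin d) (hxy : x ≠ y)
    (α β : ℂ) (hα : α ≠ 0) (hβ : β ≠ 0)
    (a : (Fin n → Fin d) → ℂ)
    (ha : a = fun i => (1 / Real.sqrt (d ^ n) : ℂ) *
        (α * Complex.exp (-(2 * Real.pi * Complex.I *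
            ((∑ t : Fin n, ((i t : ℕ) * (x t : ℕ) : ℕ) : ℕ) : ℂ) / d))
          + β * Complex.exp (-(2 * Real.pi * Complex.I *
            ((∑ t : Fin n, ((i t : ℕ) * (y t : ℕ) : ℕ) : ℕ) : ℂ) / d))))
    (h1 : a (fun _ => (⟨1, by omega⟩ : Fin d)) = 0)
    (h2 : ∀ j : Fin n,
        a (Function.update (fun _ => (⟨1, by omega⟩ : Fin d)) j
            (⟨2, by omega⟩ : Fin d)) = 0) :
    False := by
  have hd0 : (d : ℂ) ≠ 0 := by
    exact_mod_cast (by omega : d ≠ 0)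
  set E : ℕ → ℂ := fun s => Complex.exp (-(2 * Real.pi * Complex.I * (s : ℂ) / d))
    with hE
  have hEadd : ∀ s u : ℕ, E (s + u) = E s * E u := by
    intro s u
    simp only [hE, ← Complex.exp_add]
    congr 1
    push_cast
    field_simp
    ring
  have hEne : ∀ s, E s ≠ 0 := fun s => Complex.exp_ne_zero _
  have hc : (1 / (Real.sqrt (d ^ n) : ℂ)) ≠ 0 := by
    have h : (0 : ℝ) < Real.sqrt (d ^ n) := Real.sqrt_pos.2 (by positivity)
    simp only [ne_eq, one_div, inv_eq_zero]
    exact_mod_cast h.ne'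
  -- sums
  set Sx : ℕ := ∑ t : Fin n, (x t : ℕ) with hSx
  set Sy : ℕ := ∑ t : Fin n, (y t : ℕ) with hSy
  subst ha
  have k1 : α * E Sx + β * E Sy = 0 := by
    have := h1
    simp only [Fin.val_mk, one_mul] at this
    rcases mul_eq_zero.mp this with h | h
    · exact absurd h hc
    · exact h
  have key : ∀ j : Fin n, (x j : ℕ) = (y j : ℕ) := by
    intro j
    have hsum : ∀ z : Fin n → Fin d,
        (∑ t : Fin n, ((Function.update (fun _ => (⟨1, by omega⟩ : Fin d)) j
          (⟨2, by omega⟩ : Fin d) t : ℕ) * (z t : ℕ)))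
        = (∑ t : Fin n, (z t : ℕ)) + (z j : ℕ) := by
      intro z
      have : ∀ t : Fin n, ((Function.update (fun _ => (⟨1, by omega⟩ : Fin d)) j
          (⟨2, by omega⟩ : Fin d) t : ℕ) * (z t : ℕ))
          = (z t : ℕ) + (if t = j then (z t : ℕ) else 0) := by
        intro t
        rcases eq_or_ne t j with rfl | ht
        · simp [Function.update_self, two_mul]
        · simp [Function.update_of_ne ht, ht]
      rw [Finset.sum_congr rfl (fun t _ => this t), Finset.sum_add_distrib,
        Finset.sum_ite_eq' Finset.univ j (fun t => (z t : ℕ)) ]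
      simp
    have k2 : α * E (Sx + (x j : ℕ)) + β * E (Sy + (y j : ℕ)) = 0 := by
      have := h2 j
      simp only at this
      rw [hsum x, hsum y] at this
      rcases mul_eq_zero.mp this with h | h
      · exact absurd h hc
      · exact h
    rw [hEadd, hEadd] at k2
    have k1' : α * E Sx = -(β * E Sy) := by linear_combination k1
    have k2' : -(β * E Sy) * E (x j : ℕ) = -(β * E Sy) * E (y j : ℕ) := by
      linear_combination k2 - E ((x j : ℕ)) * k1
    have hne : -(β * E Sy) ≠ 0 := by
      simp only [neg_ne_zero]
      exact mul_ne_zero hβ (hEne _)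
    have hEeq : E ((x j : ℕ)) = E ((y j : ℕ)) := mul_left_cancel₀ hne k2'
    simp only [hE] at hEeq
    obtain ⟨k, hk⟩ := Complex.exp_eq_exp_iff_exists_int.mp hEeq
    have h2pi : (2 * (Real.pi : ℂ) * Complex.I) ≠ 0 := by
      simpa [mul_comm, mul_assoc] using Complex.two_pi_I_ne_zero
    have hkc : ((y j : ℕ) : ℂ) - ((x j : ℕ) : ℂ) = (k : ℂ) * d := by
      field_simp at hk
      have hz : (d : ℂ) * ((2 * (Real.pi : ℂ) * Complex.I) *
          (((y j : ℕ) : ℂ) - ((x j : ℕ) : ℂ) - (k : ℂ) * d)) = 0 := by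
        linear_combination ((d : ℂ) * (2 * (Real.pi : ℂ) * Complex.I)) * hk
      rcases mul_eq_zero.mp hz with h | h
      · exact absurd h hd0
      rcases mul_eq_zero.mp h with h | h
      · exact absurd h h2pi
      · linear_combination h
    have hkz : ((y j : ℕ) : ℤ) - ((x j : ℕ) : ℤ) = k * d := by
      exact_mod_cast hkc
    have hxb : ((x j : ℕ) : ℤ) < d := by exact_mod_cast (x j).isLt
    have hyb : ((y j : ℕ) : ℤ) < d := by exact_mod_cast (y j).isLt
    have hxb0 : (0 : ℤ) ≤ ((x j : ℕ) : ℤ) := Int.natCast_nonneg _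
    have hyb0 : (0 : ℤ) ≤ ((y j : ℕ) : ℤ) := Int.natCast_nonneg _
    have hdz : (3 : ℤ) ≤ d := by exact_mod_cast hd
    have hk0 : k = 0 := by
      by_contra h
      rcases lt_or_gt_of_ne h with h | h
      · have h1 : k ≤ -1 := by omega
        nlinarith
      · have h1 : 1 ≤ k := by omega
        nlinarith
    rw [hk0] at hkz
    simp at hkz
    omega
  exact hxy (funext fun j => Fin.ext (key j))
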